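/- Every horn inclusion Λⁿ_0 ⊆ Δⁿ in (sSet)/(A×B) whose structure map (f,g) : Δⁿ → A × B satisfies that g|Δ^{\{0,1\}} is a degenerate edge of B is a retract, in the category of arrows of (sSet)/(A×B), of a map of the form Δ¹ × K ∪ \{0\} × L → Δ¹ × L (for a monomorphism K ↪ L) whose structure map sends Δ¹ × \{v\} to a degenerate edge of B for every vertex v of L. -/

import Mathlib

universe u

open CategoryTheory Limits Simplicial SSet

namespace Paper

/-- A morphism `f` is a retract of a morphism `g` in the arrow category. -/
def RetractOfArrow {C : Type*} [Category C] {A B X Y : C} (f : A ⟶ B) (g : X ⟶ Y) : Prop :=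
  ∃ (i : A ⟶ X) (r : X ⟶ A) (i' : B ⟶ Y) (r' : Y ⟶ B),
    i ≫ r = 𝟙 A ∧ i' ≫ r' = 𝟙 B ∧ i ≫ g = f ≫ i' ∧ g ≫ r' = r ≫ f

/-- A class of morphisms is stable under retracts. -/
def StableUnderRetracts {C : Type*} [Category C] (P : MorphismProperty C) : Prop :=
  ∀ ⦃A B X Y : C⦄ (f : A ⟶ B) (g : X ⟶ Y), RetractOfArrow f g → P g → P f

/-- The cocone at stage `j` of a transfinite sequence, whose colimit condition expresses
continuity of the sequence at `j`. -/
@[simps]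
def coconeAt {C : Type*} [Category C] {J : Type} [Preorder J] (F : J ⥤ C) (j : J) :
    Cocone (ObjectProperty.ι (fun i : J => i < j) ⋙ F) where
  pt := F.obj j
  ι :=
    { app := fun i => F.map (homOfLE i.2.le)
      naturality := fun a b f => by
        dsimp
        rw [Category.comp_id, ← F.map_comp]
        exact congrArg F.map (Subsingleton.elim _ _) }

/-- A class of morphisms is stable under transfinite composition. -/
def StableUnderTransfiniteComposition {C : Type*} [Category C] (P : MorphismProperty C) :
    Prop :=
  ∀ (J : Type) (_ : LinearOrder J) (_ : SuccOrder J) (_ : OrderBot J) (_ : WellFoundedLT J)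
    (F : J ⥤ C) (c : Cocone F) (_ : IsColimit c),
    (∀ j : J, ¬IsMax j → P (F.map (homOfLE (Order.le_succ j)))) →
    (∀ j : J, Order.IsSuccLimit j → Nonempty (IsColimit (coconeAt F j))) →
    P (c.ι.app ⊥)

/-- A weakly saturated class of morphisms: closed under pushouts (cobase change),
retracts, and transfinite composition. -/
def WeaklySaturated {C : Type*} [Category C] (P : MorphismProperty C) : Prop :=
  P.IsStableUnderCobaseChange ∧ StableUnderRetracts P ∧ StableUnderTransfiniteComposition P

/-- The weakly saturated class generated by a class of morphisms: the smallest weakly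
saturated class containing it. -/
def SaturationOf {C : Type*} [Category C] (S : MorphismProperty C) : MorphismProperty C :=
  fun _ _ f => ∀ (P : MorphismProperty C), WeaklySaturated P → S ≤ P → P f

/-- The generating left horn inclusions `Λ[n, i] ⟶ Δ[n]`, `0 ≤ i < n`. -/
inductive LeftHorns : (X Y : SSet) → (X ⟶ Y) → Prop where
  | mk (n : ℕ) (i : Fin (n + 1)) (h : (i : ℕ) < n) : LeftHorns _ _ (Λ[n, i].ι)

/-- The generating right horn inclusions `Λ[n, i] ⟶ Δ[n]`, `0 < i ≤ n`. -/
inductive RightHorns : (X Y : SSet) → (X ⟶ Y) → Prop where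
  | mk (n : ℕ) (i : Fin (n + 1)) (h : 0 < (i : ℕ)) : RightHorns _ _ (Λ[n, i].ι)

/-- The generating inner horn inclusions `Λ[n, i] ⟶ Δ[n]`, `0 < i < n`. -/
inductive InnerHorns : (X Y : SSet) → (X ⟶ Y) → Prop where
  | mk (n : ℕ) (i : Fin (n + 1)) (h0 : 0 < (i : ℕ)) (h1 : (i : ℕ) < n) :
      InnerHorns _ _ (Λ[n, i].ι)

/-- Left anodyne maps: the weakly saturated class generated by the horn inclusions
`Λ[n, i] ⟶ Δ[n]` with `0 ≤ i < n`. -/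
def LeftAnodyne : MorphismProperty SSet :=
  SaturationOf (fun X Y f => LeftHorns X Y f)

/-- Right anodyne maps: the weakly saturated class generated by the horn inclusions
`Λ[n, i] ⟶ Δ[n]` with `0 < i ≤ n`. -/
def RightAnodyne : MorphismProperty SSet :=
  SaturationOf (fun X Y f => RightHorns X Y f)

/-- Inner anodyne maps: the weakly saturated class generated by the inner horn inclusions
`Λ[n, i] ⟶ Δ[n]` with `0 < i < n`. -/
def InnerAnodyne : MorphismProperty SSet :=
  SaturationOf (fun X Y f => InnerHorns X Y f)

end Paper
noncomputable section

namespace Paper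

open CategoryTheory Limits Simplicial SSet MonoidalCategory CartesianMonoidalCategory

instance homToZeroSubsingleton (x : SimplexCategory) :
    Subsingleton (x ⟶ SimplexCategory.mk 0) :=
  ⟨fun f g => by
    ext i : 3
    apply Subsingleton.elim (α := Fin 1)⟩

instance ptSubsingleton (m : SimplexCategoryᵒᵖ) : Subsingleton (Δ[0].obj m) :=
  (stdSimplex.objEquiv (n := ⦋0⦌) (m := m)).subsingleton

/-- The unique map to the standard `0`-simplex. -/
def toPt (X : SSet) : X ⟶ Δ[0] where
  app m := TypeCat.ofHom (fun _ => stdSimplex.const 0 0 m)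
  naturality _ _ _ := by
    ext
    apply Subsingleton.elim

/-- The vertex `0` of `Δ[1]`, as a map `Δ[0] ⟶ Δ[1]`. -/
def pt0 : Δ[0] ⟶ Δ[1] := SSet.stdSimplex.map (SimplexCategory.const ⦋0⦌ ⦋1⦌ 0)

/-- The vertex `1` of `Δ[1]`, as a map `Δ[0] ⟶ Δ[1]`. -/
def pt1 : Δ[0] ⟶ Δ[1] := SSet.stdSimplex.map (SimplexCategory.const ⦋0⦌ ⦋1⦌ 1)

/-- An edge `Δ[1] ⟶ B` is degenerate if it factors through a vertex. -/
def DegenerateEdge {B : SSet} (e : Δ[1] ⟶ B) : Prop :=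
  ∃ v : Δ[0] ⟶ B, e = toPt Δ[1] ≫ v

/-- The edge `Δ^{0,1}` of `Δ[n]`, as a map `Δ[1] ⟶ Δ[n]` (for `n ≥ 1`). -/
def edge01 (n : ℕ) (hn : 1 ≤ n) : Δ[1] ⟶ Δ[n] :=
  (yonedaEquiv (X := Δ[n]) (n := ⦋1⦌)).symm
    (stdSimplex.edge n 0 ⟨1, by omega⟩ (by simp [Fin.le_def]))

/-- The edge `Δ^{n-1,n}` of `Δ[n]`, as a map `Δ[1] ⟶ Δ[n]` (for `n ≥ 1`). -/
def edgeLast (n : ℕ) (hn : 1 ≤ n) : Δ[1] ⟶ Δ[n] :=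
  (yonedaEquiv (X := Δ[n]) (n := ⦋1⦌)).symm
    (stdSimplex.edge n ⟨n - 1, by omega⟩ (Fin.last n) (by simp [Fin.le_def]))

/-- Inner fibrations: right lifting property against inner horn inclusions. -/
def InnerFibration {X Y : SSet} (p : X ⟶ Y) : Prop :=
  ∀ (n : ℕ) (i : Fin (n + 1)), 0 < (i : ℕ) → (i : ℕ) < n →
    HasLiftingProperty (Λ[n, i].ι) p

/-- Left fibrations: right lifting property against `Λ[n, i] ⟶ Δ[n]` for `0 ≤ i < n`. -/
def LeftFibration {X Y : SSet} (p : X ⟶ Y) : Prop :=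
  ∀ (n : ℕ) (i : Fin (n + 1)), (i : ℕ) < n → HasLiftingProperty (Λ[n, i].ι) p

/-- Kan fibrations: right lifting property against all horn inclusions. -/
def KanFibration {X Y : SSet} (p : X ⟶ Y) : Prop :=
  ∀ (n : ℕ), 1 ≤ n → ∀ (i : Fin (n + 1)), HasLiftingProperty (Λ[n, i].ι) p

/-- Trivial Kan fibrations: right lifting property against all boundary inclusions. -/
def TrivialKanFibration {X Y : SSet} (p : X ⟶ Y) : Prop :=
  ∀ (n : ℕ), HasLiftingProperty (∂Δ[n].ι) p

/-- Lurie's notion of a bifibration `X → A × B` (HTT, 2.4.7.2). -/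
structure IsBifibration {X A B : SSet} (pq : X ⟶ A ⊗ B) : Prop where
  inner : InnerFibration pq
  left : ∀ (n : ℕ) (hn : 1 ≤ n) (u : (Λ[n, 0] : SSet) ⟶ X) (v : Δ[n] ⟶ A ⊗ B),
    u ≫ pq = Λ[n, 0].ι ≫ v →
    DegenerateEdge (edge01 n hn ≫ v ≫ snd A B) →
    ∃ w : Δ[n] ⟶ X, Λ[n, 0].ι ≫ w = u ∧ w ≫ pq = v
  right : ∀ (n : ℕ) (hn : 1 ≤ n) (u : (Λ[n, Fin.last n] : SSet) ⟶ X) (v : Δ[n] ⟶ A ⊗ B),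
    u ≫ pq = Λ[n, Fin.last n].ι ≫ v →
    DegenerateEdge (edgeLast n hn ≫ v ≫ fst A B) →
    ∃ w : Δ[n] ⟶ X, Λ[n, Fin.last n].ι ≫ w = u ∧ w ≫ pq = v

/-- The pushout-product of two maps of simplicial sets. -/
def pushoutProd {A B X Y : SSet.{u_1}} (f : A ⟶ B) (g : X ⟶ Y) :
    pushout (f ▷ X) (A ◁ g) ⟶ B ⊗ Y :=
  pushout.desc (B ◁ g) (f ▷ Y) (whisker_exchange f g).symm

/-- The diagonal map `X ⟶ X × X`. -/
def diag (X : SSet) : X ⟶ X ⊗ X := lift (𝟙 X) (𝟙 X)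

end Paper
namespace Paper

open CategoryTheory Limits SSet MonoidalCategory CartesianMonoidalCategory Simplicial

noncomputable instance : MonoidalClosed SSet.{u} :=
  (inferInstance : MonoidalClosed (SimplexCategoryᵒᵖ ⥤ Type u))

variable (A B : SSet.{u})

/-- The generating bivariant anodyne maps in `(sSet)/(A × B)`. -/
inductive BivGen : (U V : Over (A ⊗ B)) → (U ⟶ V) → Prop where
  | inner (n : ℕ) (i : Fin (n + 1)) (h0 : 0 < (i : ℕ)) (h1 : (i : ℕ) < n)
      (v : Δ[n] ⟶ A ⊗ B) :
      BivGen (Over.mk (Λ[n, i].ι ≫ v)) (Over.mk v)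
        (Over.homMk (Λ[n, i].ι))
  /-- The generating left horn inclusions over `A × B`. -/
  | left (n : ℕ) (hn : 1 ≤ n) (v : Δ[n] ⟶ A ⊗ B)
      (hdeg : DegenerateEdge (edge01 n hn ≫ v ≫ snd A B)) :
      BivGen (Over.mk (Λ[n, 0].ι ≫ v)) (Over.mk v)
        (Over.homMk (Λ[n, 0].ι))
  /-- The generating right horn inclusions over `A × B`. -/
  | right (n : ℕ) (hn : 1 ≤ n) (v : Δ[n] ⟶ A ⊗ B)
      (hdeg : DegenerateEdge (edgeLast n hn ≫ v ≫ fst A B)) :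
      BivGen (Over.mk (Λ[n, Fin.last n].ι ≫ v)) (Over.mk v)
        (Over.homMk (Λ[n, Fin.last n].ι))

/-- Bivariant anodyne maps: the weakly saturated class generated by the
generating bivariant anodyne maps. -/
def BivAnodyne : MorphismProperty (Over (A ⊗ B)) :=
  SaturationOf (fun U V f => BivGen A B U V f)

variable {A B}

/-- A map in `(sSet)/(A × B)` is a bifibration if it has the right lifting property
against all bivariant anodyne maps. -/
def OverBifibration {U V : Over (A ⊗ B)} (f : U ⟶ V) : Prop :=
  ∀ ⦃P Q : Over (A ⊗ B)⦄ (g : P ⟶ Q), BivAnodyne A B g → HasLiftingProperty g f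

open MonoidalClosed

/-- The structure map of an object of `(sSet)/(A × B)`. -/
def sMap (X : Over (A ⊗ B)) : X.left ⟶ A ⊗ B := X.hom

lemma sMap_w {X Y : Over (A ⊗ B)} (f : X ⟶ Y) : f.left ≫ sMap Y = sMap X := Over.w f


/-- The simplicial mapping space `map_{A×B}(M, X)` for two objects of `(sSet)/(A × B)`:
the fiber of `X^M → (A×B)^M` over the vertex given by the structure map of `M`. -/
noncomputable def mapOver (M X : Over (A ⊗ B)) : SSet :=
  pullback ((ihom M.left).map (sMap X)) (curry (fst M.left Δ[0] ≫ sMap M))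

/-- Functoriality of `mapOver` in the second variable. -/
noncomputable def mapOverComp (M : Over (A ⊗ B)) {X Y : Over (A ⊗ B)} (p : X ⟶ Y) :
    mapOver M X ⟶ mapOver M Y :=
  pullback.map _ _ _ _ ((ihom M.left).map p.left) (𝟙 _) (𝟙 _)
    (by rw [Category.comp_id, ← Functor.map_comp, sMap_w p]) (by simp)

/-- Contravariant functoriality of `mapOver` in the first variable. -/
noncomputable def mapOverPre {K L : Over (A ⊗ B)} (u : K ⟶ L) (X : Over (A ⊗ B)) :
    mapOver L X ⟶ mapOver K X :=
  pullback.map _ _ _ _ ((MonoidalClosed.pre u.left).app X.left) (𝟙 _)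
    ((MonoidalClosed.pre u.left).app (A ⊗ B))
    ((MonoidalClosed.pre u.left).naturality (sMap X))
    (by
      rw [Category.id_comp]
      apply uncurry_injective
      rw [uncurry_natural_left, uncurry_curry,
        show MonoidalClosed.uncurry ((MonoidalClosed.pre u.left).app (A ⊗ B)) = _ from
          MonoidalClosed.uncurry_pre u.left (A ⊗ B),
        ← Category.assoc,
        whisker_exchange u.left (MonoidalClosed.curry (fst L.left Δ[0] ≫ sMap L)),
        Category.assoc]
      have h : L.left ◁ MonoidalClosed.curry (fst L.left Δ[0] ≫ sMap L) ≫
          (ihom.ev L.left).app (A ⊗ B) = fst L.left Δ[0] ≫ sMap L := by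
        rw [← uncurry_eq, uncurry_curry]
      rw [h, whiskerRight_fst_assoc, ← sMap_w u])

/-- The vertex of the mapping space `map_{A×B}(X, Y)` determined by a map `X ⟶ Y`
over `A × B`. -/
noncomputable def vertexOfHom {X Y : Over (A ⊗ B)} (f : X ⟶ Y) : Δ[0] ⟶ mapOver X Y :=
  pullback.lift (curry (fst X.left Δ[0] ≫ f.left)) (𝟙 Δ[0])
    (by rw [← curry_natural_right, Category.assoc, sMap_w f, Category.id_comp])

/-- A fiberwise homotopy between two maps `X ⟶ Y` over `A × B`: an edge of the
simplicial mapping space `map_{A×B}(X, Y)` joining them. -/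
def FiberwiseHomotopic {X Y : Over (A ⊗ B)} (f g : X ⟶ Y) : Prop :=
  ∃ H : Δ[1] ⟶ mapOver X Y, pt0 ≫ H = vertexOfHom f ∧ pt1 ≫ H = vertexOfHom g

/-- A fiberwise homotopy equivalence over `A × B`. -/
def FiberwiseHomotopyEquiv {X Y : Over (A ⊗ B)} (h : X ⟶ Y) : Prop :=
  ∃ k : Y ⟶ X, FiberwiseHomotopic (h ≫ k) (𝟙 X) ∧ FiberwiseHomotopic (k ≫ h) (𝟙 Y)

/-- The endpoint inclusion `X ⟶ X × Δ¹` at a vertex `e` of `Δ¹`. -/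
noncomputable def cylEnd (X : SSet) (e : Δ[0] ⟶ Δ[1]) : X ⟶ X ⊗ Δ[1] :=
  lift (𝟙 X) (toPt X ≫ e)

/-- Simplicial homotopy between maps of simplicial sets. -/
def SHomotopic {X Z : SSet} (f g : X ⟶ Z) : Prop :=
  ∃ H : X ⊗ Δ[1] ⟶ Z, cylEnd X pt0 ≫ H = f ∧ cylEnd X pt1 ≫ H = g

/-- A (simplicial) homotopy equivalence of simplicial sets. -/
def SHomotopyEquiv {X Y : SSet} (f : X ⟶ Y) : Prop :=
  ∃ g : Y ⟶ X, SHomotopic (f ≫ g) (𝟙 X) ∧ SHomotopic (g ≫ f) (𝟙 Y)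

/-- A map `f : X ⟶ Y` over `A × B` is a bivariant equivalence if for every bifibration
`Z → A × B` the induced map `map_{A×B}(Y, Z) → map_{A×B}(X, Z)` is a homotopy
equivalence of Kan complexes. -/
def BivariantEquivalence {X Y : Over (A ⊗ B)} (f : X ⟶ Y) : Prop :=
  ∀ Z : Over (A ⊗ B), IsBifibration Z.hom → SHomotopyEquiv (mapOverPre f Z)

/-- The fiber of an object of `(sSet)/(A × B)` over a pair of vertices. -/
noncomputable def fiberAt (X : Over (A ⊗ B)) (a : Δ[0] ⟶ A) (b : Δ[0] ⟶ B) : SSet :=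
  pullback (sMap X) (lift a b)

/-- The map induced on fibers by a map over `A × B`. -/
noncomputable def fiberMap {X Y : Over (A ⊗ B)} (f : X ⟶ Y)
    (a : Δ[0] ⟶ A) (b : Δ[0] ⟶ B) : fiberAt X a b ⟶ fiberAt Y a b :=
  pullback.map _ _ _ _ f.left (𝟙 _) (𝟙 _) (by rw [Category.comp_id, sMap_w f]) (by simp)

/-- A retract in the category of arrows of `(sSet)/(A×B)`, expressed in terms of the
underlying maps together with the structure maps `sB`, `sY` of the codomains. -/
def RetractOfArrowOver (T : SSet) {A B X Y : SSet} (f : A ⟶ B) (g : X ⟶ Y)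
    (sB : B ⟶ T) (sY : Y ⟶ T) : Prop :=
  ∃ (i : A ⟶ X) (r : X ⟶ A) (i' : B ⟶ Y) (r' : Y ⟶ B),
    i ≫ r = 𝟙 A ∧ i' ≫ r' = 𝟙 B ∧ i ≫ g = f ≫ i' ∧ g ≫ r' = r ≫ f ∧
    i' ≫ sY = sB ∧ r' ≫ sB = sY

end Paper

namespace Paper

open CategoryTheory Limits SSet MonoidalCategory CartesianMonoidalCategory Simplicial
open SimplexCategory

section Aux

/-- Pointwise description of `lift` into a binary product of simplicial sets. -/
def plift {X Y Z : SSet} (f : X ⟶ Y) (g : X ⟶ Z) : X ⟶ Y ⊗ Z where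
  app m := TypeCat.ofHom (fun x => (f.app m x, g.app m x))
  naturality m₁ m₂ φ := by
    ext x
    simp
    rfl

lemma plift_eq {X Y Z : SSet} (f : X ⟶ Y) (g : X ⟶ Z) : plift f g = lift f g := by
  apply CartesianMonoidalCategory.hom_ext
  · rw [lift_fst]; rfl
  · rw [lift_snd]; rfl

/-- The underlying function of the retraction `Δ¹ × Δⁿ → Δⁿ`. -/
def rfun {m n : ℕ} (f : Fin (m + 1) → Fin 2) (g : Fin (m + 1) → Fin (n + 1))
    (j : Fin (m + 1)) : Fin (n + 1) :=
  if f j = 0 ∧ g j = 1 then 0 else g j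

lemma rfun_monotone {m n : ℕ} (f : Fin (m + 1) →o Fin 2) (g : Fin (m + 1) →o Fin (n + 1)) :
    Monotone (rfun f g) := by
  intro j k hjk
  unfold rfun
  by_cases h1 : f j = 0 ∧ g j = 1
  · rw [if_pos h1]; exact Fin.zero_le _
  · rw [if_neg h1]
    by_cases h2 : f k = 0 ∧ g k = 1
    · rw [if_pos h2]
      have hfj : f j = 0 := le_antisymm (h2.1 ▸ f.monotone hjk) (Fin.zero_le _)
      have hgj : g j ≠ 1 := fun h => h1 ⟨hfj, h⟩
      have hle : ((g j : Fin (n + 1)) : ℕ) ≤ ((1 : Fin (n + 1)) : ℕ) :=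
        h2.2 ▸ g.monotone hjk
      have hne : ((g j : Fin (n + 1)) : ℕ) ≠ ((1 : Fin (n + 1)) : ℕ) :=
        fun h => hgj (Fin.ext h)
      have h1v : ((1 : Fin (n + 1)) : ℕ) ≤ 1 := by
        rw [Fin.val_one']
        exact Nat.mod_le 1 (n + 1)
      apply Fin.le_def.mpr
      simp only [Fin.val_zero]
      omega
    · rw [if_neg h2]; exact g.monotone hjk

/-- The retraction as a bundled order hom. -/
def rOH {m n : ℕ} (f : Fin (m + 1) →o Fin 2) (g : Fin (m + 1) →o Fin (n + 1)) :
    Fin (m + 1) →o Fin (n + 1) :=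
  ⟨rfun f g, rfun_monotone f g⟩

lemma rOH_apply {m n : ℕ} (f : Fin (m + 1) →o Fin 2) (g : Fin (m + 1) →o Fin (n + 1))
    (j : Fin (m + 1)) :
    rOH f g j = if f j = 0 ∧ g j = 1 then 0 else g j := rfl

lemma rOH_eq_of_ne {m n : ℕ} (f : Fin (m + 1) →o Fin 2) (g : Fin (m + 1) →o Fin (n + 1))
    (j : Fin (m + 1)) (h : f j ≠ 0) : rOH f g j = g j := by
  show rfun (⇑f) (⇑g) j = g j
  rw [rfun, if_neg (fun hc => h hc.1)]

lemma rOH_eq_of_ne' {m n : ℕ} (f : Fin (m + 1) →o Fin 2) (g : Fin (m + 1) →o Fin (n + 1))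
    (j : Fin (m + 1)) (h : g j ≠ 1) : rOH f g j = g j := by
  show rfun (⇑f) (⇑g) j = g j
  rw [rfun, if_neg (fun hc => h hc.2)]

lemma rOH_eq_of_eq {m n : ℕ} (f : Fin (m + 1) →o Fin 2) (g : Fin (m + 1) →o Fin (n + 1))
    (j : Fin (m + 1)) (h0 : f j = 0) (h1 : g j = 1) : rOH f g j = 0 := by
  show rfun (⇑f) (⇑g) j = 0
  rw [rfun, if_pos ⟨h0, h1⟩]

lemma rfun_mem_horn {n : ℕ} {m : SimplexCategoryᵒᵖ}
    (f : Fin (m.unop.len + 1) →o Fin 2) (g : Fin (m.unop.len + 1) →o Fin (n + 1))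
    (hg : Set.range ⇑g ∪ {(0 : Fin (n + 1))} ≠ Set.univ) :
    Set.range ⇑(rOH f g) ∪ {(0 : Fin (n + 1))} ≠ Set.univ := by
  intro h
  apply hg
  rw [Set.eq_univ_iff_forall] at h ⊢
  intro c
  rcases h c with hc | hc
  · obtain ⟨j, hj⟩ := hc
    rw [show (rOH f g) j = rfun (⇑f) (⇑g) j from rfl, rfun] at hj
    split_ifs at hj with hcond
    · right; exact hj.symm
    · left; exact ⟨j, hj⟩
  · right; exact hc

lemma rfun_mem_horn0 {n : ℕ} (hn : 1 ≤ n) {m : SimplexCategoryᵒᵖ}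
    (f : Fin (m.unop.len + 1) →o Fin 2) (g : Fin (m.unop.len + 1) →o Fin (n + 1))
    (hf : ∀ j, f j = 0) :
    Set.range ⇑(rOH f g) ∪ {(0 : Fin (n + 1))} ≠ Set.univ := by
  intro h
  have h1 := Set.eq_univ_iff_forall.mp h (1 : Fin (n + 1))
  have hone : ((1 : Fin (n + 1)) : ℕ) = 1 := by
    rw [Fin.val_one']
    exact Nat.mod_eq_of_lt (by omega)
  have hne : (1 : Fin (n + 1)) ≠ 0 := by
    intro e
    have := congrArg Fin.val e
    rw [hone] at this
    exact one_ne_zero this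
  rcases h1 with hc | hc
  · obtain ⟨j, hj⟩ := hc
    rw [show (rOH f g) j = rfun (⇑f) (⇑g) j from rfl, rfun] at hj
    split_ifs at hj with hcond
    · exact hne hj.symm
    · exact hcond ⟨hf j, hj⟩
  · exact hne hc

/-- objMk of the tautological order hom gives back the simplex. -/
lemma objMk_eq_self {n : ℕ} {m : SimplexCategoryᵒᵖ} (x : Δ[n].obj m)
    (h : Fin (m.unop.len + 1) →o Fin (n + 1)) (hh : ∀ j, h j = stdSimplex.asOrderHom x j) :
    stdSimplex.objMk h = x := by
  have : h = stdSimplex.asOrderHom x := OrderHom.ext _ _ (funext hh)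
  rw [this]
  rfl

/-- The retraction `Δ¹ ⊗ Δⁿ ⟶ Δⁿ`. -/
def cylRetract (n : ℕ) : Δ[1] ⊗ Δ[n] ⟶ Δ[n] where
  app m := TypeCat.ofHom (fun x => stdSimplex.objMk (rOH (stdSimplex.asOrderHom x.1) (stdSimplex.asOrderHom x.2)))
  naturality m₁ m₂ φ := by ext x; rfl

/-- The retraction restricted to the horn: `Δ¹ ⊗ Λ[n,0] ⟶ Λ[n,0]`. -/
def cylRetractHorn (n : ℕ) : Δ[1] ⊗ Λ[n, 0] ⟶ Λ[n, 0] where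
  app m := TypeCat.ofHom (fun x => ⟨stdSimplex.objMk (rOH (stdSimplex.asOrderHom x.1) (stdSimplex.asOrderHom x.2.1)),
    rfun_mem_horn _ _ x.2.2⟩)
  naturality m₁ m₂ φ := by
    ext x
    apply Subtype.ext
    rfl

/-- The retraction restricted to `{0} ⊗ Δⁿ`, landing in the horn. -/
def vertRetract (n : ℕ) (hn : 1 ≤ n) : Δ[0] ⊗ Δ[n] ⟶ Λ[n, 0] where
  app m := TypeCat.ofHom (fun x => ⟨(cylRetract n).app m (pt0.app m x.1, x.2),
    rfun_mem_horn0 hn _ _ (fun _ => rfl)⟩)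
  naturality m₁ m₂ φ := by
    ext x
    apply Subtype.ext
    rfl

lemma endpt1_retract (n : ℕ) :
    plift (toPt Δ[n] ≫ pt1) (𝟙 Δ[n]) ≫ cylRetract n = 𝟙 Δ[n] := by
  apply SSet.hom_ext
  intro m
  ext x
  refine objMk_eq_self x _ (fun j => ?_)
  exact (rOH_eq_of_ne _ _ _ (by decide : ¬(1 : Fin 2) = 0)).trans rfl

lemma endpt1_retract_horn (n : ℕ) :
    plift (toPt Λ[n, 0] ≫ pt1) (𝟙 (Λ[n, 0] : SSet)) ≫ cylRetractHorn n = 𝟙 (Λ[n, 0] : SSet) := by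
  apply SSet.hom_ext
  intro m
  ext x
  apply Subtype.ext
  refine objMk_eq_self x.1 _ (fun j => ?_)
  exact (rOH_eq_of_ne _ _ _ (by decide : ¬(1 : Fin 2) = 0)).trans rfl

lemma compat1 (n : ℕ) :
    (Δ[1] ◁ Λ[n, 0].ι) ≫ cylRetract n = cylRetractHorn n ≫ Λ[n, 0].ι := by
  apply SSet.hom_ext
  intro m
  ext x
  rfl

lemma compat2 (n : ℕ) (hn : 1 ≤ n) :
    (pt0 ▷ Δ[n]) ≫ cylRetract n = vertRetract n hn ≫ Λ[n, 0].ι := by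
  apply SSet.hom_ext
  intro m
  ext x
  rfl

lemma compat0 (n : ℕ) (hn : 1 ≤ n) :
    (pt0 ▷ Λ[n, 0]) ≫ cylRetractHorn n = (Δ[0] ◁ Λ[n, 0].ι) ≫ vertRetract n hn := by
  apply SSet.hom_ext
  intro m
  ext x
  apply Subtype.ext
  rfl

/-- The vertex of `Δ[n]` hit by a map `Δ[0] ⟶ Δ[n]`. -/
def vtx (n : ℕ) (w : Δ[0] ⟶ Δ[n]) : Fin (n + 1) :=
  stdSimplex.asOrderHom (w.app (Opposite.op ⦋0⦌) (stdSimplex.const 0 0 _)) 0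

lemma asOrderHom_w {n : ℕ} (w : Δ[0] ⟶ Δ[n]) (m : SimplexCategoryᵒᵖ)
    (y : Δ[0].obj m) (j : Fin (m.unop.len + 1)) :
    stdSimplex.asOrderHom (w.app m y) j = vtx n w := by
  have hy : (Δ[0].map (SimplexCategory.const m.unop ⦋0⦌ 0).op
      (stdSimplex.const 0 0 _)) = y := Subsingleton.elim _ _
  rw [← hy]
  have h := (FunctorToTypes.naturality w (SimplexCategory.const m.unop ⦋0⦌ 0).op
    (stdSimplex.const 0 0 _))
  rw [h]
  exact congrArg (stdSimplex.asOrderHom (w.app (Opposite.op ⦋0⦌) (stdSimplex.const 0 0 _)))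
    (Subsingleton.elim (α := Fin 1) _ _)

lemma plift_R_of_ne {n : ℕ} (w : Δ[0] ⟶ Δ[n]) (hvtx : vtx n w ≠ 1) :
    plift (𝟙 Δ[1]) (toPt Δ[1] ≫ w) ≫ cylRetract n = toPt Δ[1] ≫ w := by
  apply SSet.hom_ext
  intro m
  ext t
  refine objMk_eq_self _ _ (fun j => ?_)
  refine (rOH_eq_of_ne' _ _ _ ?_).trans rfl
  intro h1
  have h1' : stdSimplex.asOrderHom (w.app m ((toPt Δ[1]).app m t)) j = 1 := h1
  rw [asOrderHom_w] at h1'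
  exact hvtx h1'

lemma plift_R_of_eq {n : ℕ} (hn : 1 ≤ n) (w : Δ[0] ⟶ Δ[n]) (hvtx : vtx n w = 1) :
    plift (𝟙 Δ[1]) (toPt Δ[1] ≫ w) ≫ cylRetract n = edge01 n hn := by
  have hone : (1 : Fin (n + 1)) = ⟨1, by omega⟩ := by
    apply Fin.ext
    rw [Fin.val_one']
    exact Nat.mod_eq_of_lt (by omega)
  have hl : ((Opposite.unop (Opposite.op (⦋1⦌ : SimplexCategory))).len) = 1 := rfl
  apply (SSet.yonedaEquiv (X := Δ[n]) (n := ⦋1⦌)).injective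
  rw [edge01, Equiv.apply_symm_apply]
  refine objMk_eq_self _ _ (fun j => ?_)
  by_cases hj : (j : ℕ) = 0
  · have hj0 : j = 0 := Fin.ext (by rw [hj]; rfl)
    refine (rOH_eq_of_eq _ _ _ ?_ ?_).trans ?_
    · exact hj0
    · exact (asOrderHom_w w _ _ j).trans hvtx
    · rw [hj0]
      rfl
  · have hjv : (j : ℕ) = 1 := by have := j.isLt; omega
    refine (rOH_eq_of_ne _ _ _ ?_).trans ?_
    · exact fun h => hj (congrArg Fin.val (h : j = 0))
    · refine ((asOrderHom_w w _ _ j).trans hvtx).trans ?_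
      have hj1 : j = ⟨1, by omega⟩ := Fin.ext (by rw [hjv])
      rw [hj1]
      exact hone

end Aux

end Paper

open Paper CategoryTheory Limits SSet MonoidalCategory CartesianMonoidalCategory in
/-- every horn `Λ[n,0] ⟶ Δ[n]` over `A × B` whose structure map is
degenerate on the edge `Δ^{0,1}` in the `B`-coordinate is a retract over `A × B` of a
map of the form `Δ¹ × K ∪ {0} × L → Δ¹ × L` whose structure map is degenerate on
`Δ¹ × {v}` in the `B`-coordinate for every vertex `v` of `L`. -/
theorem horn_retract_of_cylinder_inclusion (A B : SSet) (n : ℕ) (hn : 1 ≤ n)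
    (v : Δ[n] ⟶ A ⊗ B)
    (hdeg : DegenerateEdge (edge01 n hn ≫ v ≫ snd A B)) :
    ∃ (K L : SSet) (u : K ⟶ L) (_ : Mono u) (σ : Δ[1] ⊗ L ⟶ A ⊗ B),
      (∀ w : Δ[0] ⟶ L,
        DegenerateEdge (lift (𝟙 Δ[1]) (toPt Δ[1] ≫ w) ≫ σ ≫ snd A B)) ∧
      RetractOfArrowOver (A ⊗ B) (Λ[n, 0].ι) (pushoutProd pt0 u) v σ := by
  refine ⟨Λ[n, 0], Δ[n], Λ[n, 0].ι, ?_, cylRetract n ≫ v, ?_, ?_⟩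
  · haveI : ∀ m, Mono ((Λ[n, 0].ι).app m) := fun m =>
      (mono_iff_injective _).mpr (fun a b h => Subtype.ext h)
    exact NatTrans.mono_of_mono_app _
  · intro w
    rw [← plift_eq]
    by_cases hvtx : vtx n w = 1
    · obtain ⟨v', hv'⟩ := hdeg
      refine ⟨v', ?_⟩
      have key := plift_R_of_eq hn w hvtx
      calc plift (𝟙 Δ[1]) (toPt Δ[1] ≫ w) ≫ (cylRetract n ≫ v) ≫ snd A B
          = (plift (𝟙 Δ[1]) (toPt Δ[1] ≫ w) ≫ cylRetract n) ≫ v ≫ snd A B := by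
            simp only [Category.assoc]
        _ = edge01 n hn ≫ v ≫ snd A B := by rw [key]
        _ = toPt Δ[1] ≫ v' := hv'
    · refine ⟨w ≫ v ≫ snd A B, ?_⟩
      have key := plift_R_of_ne w hvtx
      calc plift (𝟙 Δ[1]) (toPt Δ[1] ≫ w) ≫ (cylRetract n ≫ v) ≫ snd A B
          = (plift (𝟙 Δ[1]) (toPt Δ[1] ≫ w) ≫ cylRetract n) ≫ v ≫ snd A B := by
            simp only [Category.assoc]
        _ = (toPt Δ[1] ≫ w) ≫ v ≫ snd A B := by rw [key]
        _ = toPt Δ[1] ≫ w ≫ v ≫ snd A B := by simp only [Category.assoc]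
  · refine ⟨plift (toPt Λ[n, 0] ≫ pt1) (𝟙 (Λ[n, 0] : SSet)) ≫ pushout.inl _ _,
      pushout.desc (cylRetractHorn n) (vertRetract n hn) (compat0 n hn),
      plift (toPt Δ[n] ≫ pt1) (𝟙 Δ[n]), cylRetract n,
      ?_, endpt1_retract n, ?_, ?_, ?_, rfl⟩
    · rw [Category.assoc, pushout.inl_desc]
      exact endpt1_retract_horn n
    · rw [pushoutProd, Category.assoc, pushout.inl_desc]
      apply SSet.hom_ext
      intro m
      ext x
      rfl
    · rw [pushoutProd]
      apply pushout.hom_ext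
      · rw [pushout.inl_desc_assoc, pushout.inl_desc_assoc]
        exact compat1 n
      · rw [pushout.inr_desc_assoc, pushout.inr_desc_assoc]
        exact compat2 n hn
    · rw [← Category.assoc, endpt1_retract n, Category.id_comp]
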